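/- Let X be a topological space, γ : X → X a homeomorphism, and F : X → ℝ a continuous proper function (the preimage of every compact subset of ℝ is compact) satisfying F(γ(x)) = F(x) + 1 for all x ∈ X. Then the orbit space of the ℤ-action generated by γ — the quotient of X by the equivalence relation x ∼ y ⟺ (∃ n ∈ ℤ, y = γ^n(x)) — is a compact topological space. -/

import Mathlib

open Set

/-- if γ is a homeomorphism of X and F : X → ℝ is continuous, proper and
satisfies F(γ(x)) = F(x) + 1, then the orbit space of the ℤ-action generated by γ is
compact. -/
theorem stmt8 {X : Type*} [TopologicalSpace X] (γ : X ≃ₜ X) (F : X → ℝ)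
    (hF : Continuous F)
    (hprop : ∀ K : Set ℝ, IsCompact K → IsCompact (F ⁻¹' K))
    (heq : ∀ x : X, F (γ x) = F x + 1) :
    CompactSpace (Quot fun x y : X => ∃ n : ℤ, y = (γ.toEquiv ^ n) x) := by
  have key : ∀ (n : ℤ) (x : X), F ((γ.toEquiv ^ n) x) = F x + n := by
    intro n
    induction n using Int.induction_on with
    | zero => simp
    | succ k ih =>
      intro x
      have : (γ.toEquiv ^ ((k : ℤ) + 1)) x = γ.toEquiv ((γ.toEquiv ^ (k : ℤ)) x) := by
        rw [add_comm, zpow_add, zpow_one]; rfl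
      rw [this]
      show F (γ _) = _
      rw [heq, ih]; push_cast; ring
    | pred k ih =>
      intro x
      have hinv : F (γ.toEquiv⁻¹ x) = F x - 1 := by
        have := heq (γ.symm x)
        simp only [Homeomorph.apply_symm_apply] at this
        have h2 : γ.toEquiv⁻¹ x = γ.symm x := rfl
        rw [h2]; linarith
      have h1 : (γ.toEquiv ^ (-(k : ℤ) - 1)) x
          = (γ.toEquiv ^ (-(k : ℤ))) (γ.toEquiv⁻¹ x) := by
        rw [← Equiv.Perm.mul_apply, ← zpow_neg_one, ← zpow_add]
        ring_nf
      rw [h1, ih, hinv]; push_cast; ring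
  set K : Set X := F ⁻¹' (Icc 0 1) with hK
  have hKc : IsCompact K := hprop _ isCompact_Icc
  constructor
  have hsurj : Quot.mk (fun x y : X => ∃ n : ℤ, y = (γ.toEquiv ^ n) x) '' K = univ := by
    apply eq_univ_of_forall
    intro q
    obtain ⟨x, rfl⟩ := Quot.exists_rep q
    set n : ℤ := -⌊F x⌋ with hn
    refine ⟨(γ.toEquiv ^ n) x, ?_, ?_⟩
    · simp only [hK, mem_preimage, key n x]; rw [hn]
      constructor
      · push_cast; linarith [Int.floor_le (F x)]
      · push_cast; linarith [Int.lt_floor_add_one (F x)]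
    · exact (Quot.sound ⟨n, rfl⟩).symm
  rw [← hsurj]
  exact hKc.image (continuous_quot_mk)
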